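/- Let (M, d) be a Polish space, m a probability measure, and for each n ∈ ℕ let R_n be a probability measure on M × M with positive density p_n with respect to m ⊗ m. Suppose that for every compact set K ⊆ M × M, inf_K (−log p_n) ≥ −c_n with c_n → 0 (so that lim inf_n ∫ φ dR_n ≥ ∫ φ d(m⊗m) for all nonnegative lower semicontinuous φ, i.e. R_n ⇀ m⊗m weakly). Then for any sequence π_n ⇀ π of couplings, lim inf_n H(π_n | R_n) ≥ H(π | m⊗m). -/

import Mathlib

open MeasureTheory Filter
open scoped ENNReal Classical BoundedContinuousFunction

/-- Extended relative entropy `H(p|q) ∈ [0,∞]`. -/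
noncomputable def relEntE {Ω : Type*} [MeasurableSpace Ω] (p q : Measure Ω) : ℝ≥0∞ :=
  if p ≪ q ∧ Integrable (fun x => Real.log (p.rnDeriv q x).toReal) p
  then ENNReal.ofReal (∫ x, Real.log (p.rnDeriv q x).toReal ∂p) else ⊤

open Real

section Aux
variable {Ω : Type*} [MeasurableSpace Ω]

lemma aux_inv_rnDeriv (P Q : Measure Ω) [IsFiniteMeasure P] [IsProbabilityMeasure Q]
    (h : P ≪ Q) :
    Integrable (fun x => ((P.rnDeriv Q x).toReal)⁻¹) P ∧
      ∫ x, ((P.rnDeriv Q x).toReal)⁻¹ ∂P ≤ 1 := by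
  have hm : Measurable fun x => ((P.rnDeriv Q x).toReal)⁻¹ :=
    (Measure.measurable_rnDeriv P Q).ennreal_toReal.inv
  have hnn : ∀ x, 0 ≤ ((P.rnDeriv Q x).toReal)⁻¹ := fun x => by positivity
  have hlin : ∫⁻ x, ENNReal.ofReal (((P.rnDeriv Q x).toReal)⁻¹) ∂P ≤ 1 := by
    calc ∫⁻ x, ENNReal.ofReal (((P.rnDeriv Q x).toReal)⁻¹) ∂P
        = ∫⁻ x, ENNReal.ofReal (((P.rnDeriv Q x).toReal)⁻¹)
            ∂(Q.withDensity (P.rnDeriv Q)) := by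
          rw [Measure.withDensity_rnDeriv_eq P Q h]
      _ = ∫⁻ x, (P.rnDeriv Q x * ENNReal.ofReal (((P.rnDeriv Q x).toReal)⁻¹)) ∂Q := by
          rw [lintegral_withDensity_eq_lintegral_mul _ (Measure.measurable_rnDeriv P Q)
            hm.ennreal_ofReal]
          rfl
      _ ≤ ∫⁻ _, 1 ∂Q := by
          refine lintegral_mono fun x => ?_
          set d := P.rnDeriv Q x with hd
          rcases eq_or_ne d ⊤ with hdt | hdt
          · simp [hdt]
          rcases eq_or_ne d 0 with hd0 | hd0
          · simp [hd0]
          · rw [← ENNReal.toReal_inv, ENNReal.ofReal_toReal (by simp [hd0]),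
              ENNReal.mul_inv_cancel hd0 hdt]
      _ = 1 := by simp
  have hInt : Integrable (fun x => ((P.rnDeriv Q x).toReal)⁻¹) P := by
    refine ⟨hm.aestronglyMeasurable, ?_⟩
    rw [hasFiniteIntegral_iff_ofReal (ae_of_all _ hnn)]
    exact lt_of_le_of_lt hlin ENNReal.one_lt_top
  refine ⟨hInt, ?_⟩
  rw [integral_eq_lintegral_of_nonneg_ae (ae_of_all _ hnn) hm.aestronglyMeasurable]
  calc (∫⁻ x, ENNReal.ofReal (((P.rnDeriv Q x).toReal)⁻¹) ∂P).toReal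
      ≤ (1 : ℝ≥0∞).toReal := ENNReal.toReal_mono ENNReal.one_ne_top hlin
    _ = 1 := by simp

lemma integral_llr_nonneg' (P Q : Measure Ω) [IsProbabilityMeasure P] [IsProbabilityMeasure Q]
    (h : P ≪ Q) (hint : Integrable (llr P Q) P) : 0 ≤ ∫ x, llr P Q x ∂P := by
  obtain ⟨hinvInt, hinvLe⟩ := aux_inv_rnDeriv P Q h
  have hpos : ∀ᵐ x ∂P, 0 < (P.rnDeriv Q x).toReal := by
    filter_upwards [Measure.rnDeriv_pos h, h.ae_le (Measure.rnDeriv_lt_top P Q)] with x h1 h2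
    exact ENNReal.toReal_pos h1.ne' h2.ne
  have hineq : ∀ᵐ x ∂P, - llr P Q x ≤ ((P.rnDeriv Q x).toReal)⁻¹ - 1 := by
    filter_upwards [hpos] with x hx
    show - Real.log _ ≤ _
    rw [← Real.log_inv]
    exact Real.log_le_sub_one_of_pos (by positivity)
  have hmono := integral_mono_ae hint.neg (hinvInt.sub (integrable_const 1)) hineq
  simp only [Pi.neg_apply, Pi.sub_apply] at hmono
  rw [integral_neg, integral_sub hinvInt (integrable_const 1), integral_const] at hmono
  simp only [measure_univ, probReal_univ, ENNReal.toReal_one, smul_eq_mul, one_mul] at hmono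
  linarith

end Aux

section Gibbs
variable {Ω : Type*} [MeasurableSpace Ω]

lemma relEntE_eq (P Q : Measure Ω) :
    relEntE P Q = if P ≪ Q ∧ Integrable (llr P Q) P
      then ENNReal.ofReal (∫ x, llr P Q x ∂P) else ⊤ := rfl

lemma ofReal_DV_le_relEntE (P Q : Measure Ω) [IsProbabilityMeasure P] [IsProbabilityMeasure Q]
    {f : Ω → ℝ} (hfm : Measurable f) {B : ℝ} (hB : ∀ x, |f x| ≤ B) :
    ENNReal.ofReal (∫ x, f x ∂P - Real.log (∫ x, Real.exp (f x) ∂Q)) ≤ relEntE P Q := by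
  rw [relEntE_eq]
  split_ifs with hcon
  · obtain ⟨hac, hint⟩ := hcon
    have hfi : Integrable f P :=
      (integrable_const B).mono' hfm.aestronglyMeasurable
        (ae_of_all _ fun x => by simpa using hB x)
    have hef : Integrable (fun x => Real.exp (f x)) Q := by
      refine (integrable_const (Real.exp B)).mono'
        (Real.continuous_exp.measurable.comp hfm).aestronglyMeasurable
        (ae_of_all _ fun x => ?_)
      rw [Real.norm_eq_abs, abs_of_pos (Real.exp_pos _)]
      exact Real.exp_le_exp.2 (le_trans (le_abs_self _) (hB x))
    have hQt : IsProbabilityMeasure (Q.tilted f) := isProbabilityMeasure_tilted hef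
    have h0 : 0 ≤ ∫ x, llr P (Q.tilted f) x ∂P := by
      refine integral_llr_nonneg' P _ (hac.trans (absolutelyContinuous_tilted hef)) ?_
      exact integrable_llr_tilted_right hac hfi hint hef
    rw [integral_llr_tilted_right hac hfi hef hint] at h0
    exact ENNReal.ofReal_le_ofReal (by linarith)
  · exact le_top

end Gibbs

lemma clamp_abs_le {k t : ℝ} (hk : 0 ≤ k) : |max (-k) (min k t)| ≤ k := by
  rw [abs_le]
  exact ⟨le_max_left _ _, max_le (by linarith) (min_le_left _ _)⟩

lemma clamp_close {k a t : ℝ} (ha : |a| ≤ k) : |a - max (-k) (min k t)| ≤ |a - t| := by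
  rw [abs_le] at ha
  rcases le_total t (-k) with h1 | h1
  · rw [min_eq_right (le_trans h1 (by linarith)), max_eq_left h1,
      abs_of_nonneg (by linarith), abs_of_nonneg (by linarith)]
    linarith
  · rcases le_total k t with h2 | h2
    · rw [min_eq_left h2, max_eq_right (by linarith : -k ≤ k),
        abs_of_nonpos (by linarith), abs_of_nonpos (by linarith)]
      linarith
    · rw [min_eq_right h2, max_eq_right h1]

lemma clamp_abs_le' {k t : ℝ} (hk : 0 ≤ k) : |max (-k) (min k t)| ≤ |t| := by
  rw [abs_le]
  constructor
  · exact le_trans (le_min (by linarith [abs_nonneg t]) (neg_abs_le t)) (le_max_right _ _)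
  · exact max_le (by linarith [abs_nonneg t]) ((min_le_right _ _).trans (le_abs_self t))

lemma exp_sub_exp_le {a b k : ℝ} (ha : a ≤ k) (hb : b ≤ k) :
    |Real.exp a - Real.exp b| ≤ Real.exp k * |a - b| := by
  wlog hab : b ≤ a generalizing a b
  · rw [abs_sub_comm, abs_sub_comm a b]; exact this hb ha (le_of_not_ge hab)
  rw [abs_of_nonneg (sub_nonneg.2 (Real.exp_le_exp.2 hab)), abs_of_nonneg (sub_nonneg.2 hab)]
  have h1 := Real.add_one_le_exp (b - a)
  have h2 : Real.exp a * Real.exp (b - a) = Real.exp b := by rw [← Real.exp_add]; ring_nf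
  nlinarith [Real.exp_pos a, Real.exp_le_exp.2 ha, Real.exp_le_exp.2 hab]

section Bridge
variable {Ω : Type*} [MeasurableSpace Ω] [MetricSpace Ω] [BorelSpace Ω]

lemma exists_bcf_close (P Q : Measure Ω) [IsFiniteMeasure P] [IsFiniteMeasure Q]
    {f : Ω → ℝ} (hfm : Measurable f) {k : ℝ} (hk : 0 ≤ k) (hbd : ∀ x, |f x| ≤ k)
    {ε : ℝ} (hε : 0 < ε) :
    ∃ g : Ω →ᵇ ℝ, (∀ x, |g x| ≤ k) ∧ ∫ x, |f x - g x| ∂P ≤ ε ∧ ∫ x, |f x - g x| ∂Q ≤ ε := by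
  have hfi : Integrable f (P + Q) :=
    (integrable_const k).mono' hfm.aestronglyMeasurable (ae_of_all _ fun x => by simpa using hbd x)
  obtain ⟨g0, hg0, -⟩ := hfi.exists_boundedContinuous_integral_sub_le hε
  set g : Ω →ᵇ ℝ := BoundedContinuousFunction.ofNormedAddCommGroup
    (fun x => max (-k) (min k (g0 x)))
    (continuous_const.max (continuous_const.min g0.continuous)) k
    (fun x => by rw [Real.norm_eq_abs]; exact clamp_abs_le hk) with hgdef
  have hgx : ∀ x, g x = max (-k) (min k (g0 x)) := fun x => rfl
  have hgabs : ∀ x, |g x| ≤ k := fun x => by rw [hgx]; exact clamp_abs_le hk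
  have hgi : Integrable (fun x => |f x - g x|) (P + Q) :=
    (hfi.sub (g.integrable _)).abs
  have key : ∫ x, |f x - g x| ∂(P + Q) ≤ ε := by
    refine le_trans (integral_mono hgi ((hfi.sub (g0.integrable _)).abs.mono'
      ((hfm.sub g0.continuous.measurable).abs).aestronglyMeasurable
      (ae_of_all _ fun x => by simp)) fun x => ?_) ?_
    · rw [hgx]; exact clamp_close (hbd x)
    · simpa [Real.norm_eq_abs] using hg0
  rw [integral_add_measure hgi.left_of_add_measure hgi.right_of_add_measure] at key
  have h1 : 0 ≤ ∫ x, |f x - g x| ∂P := integral_nonneg fun x => abs_nonneg _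
  have h2 : 0 ≤ ∫ x, |f x - g x| ∂Q := integral_nonneg fun x => abs_nonneg _
  exact ⟨g, hgabs, by linarith, by linarith⟩

end Bridge

section Bridge2
variable {Ω : Type*} [MeasurableSpace Ω] [MetricSpace Ω] [BorelSpace Ω]

/-- From a bounded measurable `f`, get a bounded continuous `g` whose DV functional is
almost as large. -/
lemma DV_of_bounded (P Q : Measure Ω) [IsProbabilityMeasure P] [IsProbabilityMeasure Q]
    {f : Ω → ℝ} (hfm : Measurable f) {k : ℝ} (hk : 0 ≤ k) (hbd : ∀ x, |f x| ≤ k)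
    {ε : ℝ} (hε : 0 < ε) :
    ∃ g : Ω →ᵇ ℝ, (∀ x, |g x| ≤ k) ∧
      ∫ x, f x ∂P - ε ≤ ∫ x, g x ∂P ∧
      ∫ x, Real.exp (g x) ∂Q ≤ ∫ x, Real.exp (f x) ∂Q + Real.exp k * ε := by
  obtain ⟨g, hgabs, hP, hQ⟩ := exists_bcf_close P Q hfm hk hbd hε
  have hfiP : Integrable f P :=
    (integrable_const k).mono' hfm.aestronglyMeasurable (ae_of_all _ fun x => by simpa using hbd x)
  have hsubi : Integrable (fun x => |f x - g x|) P := (hfiP.sub (g.integrable _)).abs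
  refine ⟨g, hgabs, ?_, ?_⟩
  · have h1 : ∫ x, f x ∂P - ∫ x, g x ∂P ≤ ∫ x, |f x - g x| ∂P := by
      rw [← integral_sub hfiP (g.integrable _)]
      refine le_trans (le_abs_self _) ?_
      rw [← Real.norm_eq_abs]
      exact le_trans (norm_integral_le_integral_norm _) (by simp [Real.norm_eq_abs])
    linarith
  · have hefQ : Integrable (fun x => Real.exp (f x)) Q :=
      (integrable_const (Real.exp k)).mono'
        (Real.continuous_exp.measurable.comp hfm).aestronglyMeasurable
        (ae_of_all _ fun x => by
          rw [Real.norm_eq_abs, abs_of_pos (Real.exp_pos _)]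
          exact Real.exp_le_exp.2 (le_trans (le_abs_self _) (hbd x)))
    have hegQ : Integrable (fun x => Real.exp (g x)) Q :=
      (integrable_const (Real.exp k)).mono'
        (Real.continuous_exp.comp g.continuous).aestronglyMeasurable
        (ae_of_all _ fun x => by
          rw [Real.norm_eq_abs, abs_of_pos (Real.exp_pos _)]
          exact Real.exp_le_exp.2 (le_trans (le_abs_self _) (hgabs x)))
    have hsubQ : Integrable (fun x => |f x - g x|) Q :=
      ((((integrable_const k).mono' hfm.aestronglyMeasurable
        (ae_of_all _ fun x => by simpa using hbd x))).sub (g.integrable _)).abs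
    have h2 : ∫ x, Real.exp (g x) ∂Q - ∫ x, Real.exp (f x) ∂Q
        ≤ Real.exp k * ∫ x, |f x - g x| ∂Q := by
      rw [← integral_sub hegQ hefQ, ← integral_const_mul]
      refine integral_mono (hegQ.sub hefQ) (hsubQ.const_mul _) fun x => ?_
      calc Real.exp (g x) - Real.exp (f x) ≤ |Real.exp (g x) - Real.exp (f x)| := le_abs_self _
        _ ≤ Real.exp k * |g x - f x| :=
            exp_sub_exp_le (le_trans (le_abs_self _) (hgabs x))
              (le_trans (le_abs_self _) (hbd x))
        _ = Real.exp k * |f x - g x| := by rw [abs_sub_comm]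
    nlinarith [Real.exp_pos k]

end Bridge2

section CaseA
variable {Ω : Type*} [MeasurableSpace Ω] [MetricSpace Ω] [BorelSpace Ω]

lemma exists_bcf_DV_not_ac (P Q : Measure Ω) [IsProbabilityMeasure P] [IsProbabilityMeasure Q]
    (hac : ¬ P ≪ Q) (L : ℝ) :
    ∃ g : Ω →ᵇ ℝ, L ≤ ∫ x, g x ∂P - Real.log (∫ x, Real.exp (g x) ∂Q) := by
  -- find a measurable Q-null set with positive P-measure
  have hex : ¬ ∀ s, MeasurableSet s → Q s = 0 → P s = 0 :=
    fun h => hac (Measure.AbsolutelyContinuous.mk h)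
  push_neg at hex
  obtain ⟨S, hSm, hQS, hPS⟩ := hex
  -- closed subset with positive P-measure
  obtain ⟨K, hKS, hKc, hKlt⟩ := hSm.exists_isClosed_lt_add (measure_ne_top P S)
    (ε := P S / 2) (by simp [ENNReal.div_eq_zero_iff, hPS])
  have hQK : Q K = 0 := measure_mono_null hKS hQS
  have hPK : P K ≠ 0 := by
    intro h0
    rw [h0, zero_add] at hKlt
    exact absurd (ENNReal.half_le_self (a := P S)) (not_le.2 hKlt)
  have hKne : K.Nonempty := by
    rcases Set.eq_empty_or_nonempty K with h | h
    · exact absurd (h ▸ measure_empty) hPK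
    · exact h
  set a := (P K).toReal with ha
  have ha0 : 0 < a := ENNReal.toReal_pos hPK (measure_ne_top P K)
  set t := max 1 ((L + Real.log 2 + 1) / a) with htdef
  have ht1 : (1:ℝ) ≤ t := le_max_left _ _
  have ht0 : 0 < t := lt_of_lt_of_le one_pos ht1
  have hta : L + Real.log 2 + 1 ≤ t * a := by
    have := (div_le_iff₀ ha0).mp (le_max_right 1 ((L + Real.log 2 + 1) / a))
    linarith
  -- choose δ with Q (thickening δ K) < exp (-t)
  have htend : Tendsto (fun δ => Q (Metric.thickening δ K)) (nhdsWithin 0 (Set.Ioi 0))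
      (nhds (Q K)) :=
    tendsto_measure_thickening_of_isClosed ⟨1, one_pos, measure_ne_top Q _⟩ hKc
  have hev : ∀ᶠ δ in nhdsWithin 0 (Set.Ioi 0),
      Q (Metric.thickening δ K) < ENNReal.ofReal (Real.exp (-t)) := by
    rw [hQK] at htend
    exact htend.eventually_lt_const (ENNReal.ofReal_pos.2 (Real.exp_pos _))
  obtain ⟨δ, hδQ, hδ0⟩ := (hev.and self_mem_nhdsWithin).exists
  -- the bump function
  set g : Ω →ᵇ ℝ := BoundedContinuousFunction.ofNormedAddCommGroup
    (fun x => t * max 0 (1 - Metric.infDist x K / δ))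
    (continuous_const.mul (continuous_const.max
      ((continuous_const.sub ((Metric.continuous_infDist_pt K).div_const δ)))))
    t
    (fun x => by
      rw [Real.norm_eq_abs, abs_of_nonneg (by positivity)]
      have hd := div_nonneg (Metric.infDist_nonneg (s := K) (x := x)) hδ0.le
      have h1 : max 0 (1 - Metric.infDist x K / δ) ≤ 1 := max_le zero_le_one (by linarith)
      nlinarith) with hgdef
  have hgx : ∀ x, g x = t * max 0 (1 - Metric.infDist x K / δ) := fun x => rfl
  have hgnn : ∀ x, 0 ≤ g x := fun x => by rw [hgx]; positivity
  have hgle : ∀ x, g x ≤ t := fun x => by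
    rw [hgx]
    have hd := div_nonneg (Metric.infDist_nonneg (s := K) (x := x)) hδ0.le
    have h1 : max 0 (1 - Metric.infDist x K / δ) ≤ 1 := max_le zero_le_one (by linarith)
    nlinarith
  have hgK : ∀ x ∈ K, g x = t := fun x hx => by
    rw [hgx, Metric.infDist_zero_of_mem hx]
    norm_num
  have hg0 : ∀ x, x ∉ Metric.thickening δ K → g x = 0 := fun x hx => by
    rw [Metric.mem_thickening_iff_infDist_lt hKne, not_lt] at hx
    rw [hgx, max_eq_left, mul_zero]
    rw [sub_nonpos]
    exact (one_le_div hδ0).mpr hx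
  -- lower bound for ∫ g dP
  have hPint : t * a ≤ ∫ x, g x ∂P := by
    have hind : ∀ x, Set.indicator K (fun _ => t) x ≤ g x := by
      intro x
      by_cases hx : x ∈ K
      · rw [Set.indicator_of_mem hx, hgK x hx]
      · rw [Set.indicator_of_notMem hx]; exact hgnn x
    calc t * a = ∫ x, Set.indicator K (fun _ => t) x ∂P := by
          rw [integral_indicator_const _ hKc.measurableSet]
          simp [ha, mul_comm, Measure.real]
      _ ≤ ∫ x, g x ∂P :=
          integral_mono ((integrable_const t).indicator hKc.measurableSet) (g.integrable P) hind
  -- upper bound for ∫ exp (g x) dQ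
  have hegQ : Integrable (fun x => Real.exp (g x)) Q :=
    (integrable_const (Real.exp t)).mono'
      (Real.continuous_exp.comp g.continuous).aestronglyMeasurable
      (ae_of_all _ fun x => by
        rw [Real.norm_eq_abs, abs_of_pos (Real.exp_pos _)]
        exact Real.exp_le_exp.2 (hgle x))
  have hQe : ∫ x, Real.exp (g x) ∂Q ≤ 2 := by
    have hpt : ∀ x, Real.exp (g x)
        ≤ Set.indicator (Metric.thickening δ K) (fun _ => Real.exp t) x + 1 := by
      intro x
      by_cases hx : x ∈ Metric.thickening δ K
      · rw [Set.indicator_of_mem hx]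
        have := Real.exp_le_exp.2 (hgle x)
        linarith [Real.exp_pos t]
      · rw [Set.indicator_of_notMem hx, hg0 x hx]
        simp
    have hthick : (Q (Metric.thickening δ K)).toReal ≤ Real.exp (-t) := by
      refine le_trans (ENNReal.toReal_mono (by simp) hδQ.le) ?_
      rw [ENNReal.toReal_ofReal (Real.exp_pos _).le]
    calc ∫ x, Real.exp (g x) ∂Q
        ≤ ∫ x, (Set.indicator (Metric.thickening δ K) (fun _ => Real.exp t) x + 1) ∂Q := by
          refine integral_mono hegQ ?_ hpt
          exact ((integrable_const _).indicator Metric.isOpen_thickening.measurableSet).add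
            (integrable_const 1)
      _ = (Q (Metric.thickening δ K)).toReal * Real.exp t + 1 := by
          rw [integral_add ((integrable_const _).indicator
            Metric.isOpen_thickening.measurableSet) (integrable_const 1),
            integral_indicator_const _ Metric.isOpen_thickening.measurableSet]
          simp [smul_eq_mul, Measure.real]
      _ ≤ Real.exp (-t) * Real.exp t + 1 := by
          nlinarith [Real.exp_pos t]
      _ = 2 := by rw [← Real.exp_add]; norm_num
  refine ⟨g, ?_⟩
  have hlog : Real.log (∫ x, Real.exp (g x) ∂Q) ≤ Real.log 2 :=
    Real.log_le_log (integral_exp_pos hegQ) hQe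
  have := hPint
  linarith

end CaseA

section CaseBC
variable {Ω : Type*} [MeasurableSpace Ω] [MetricSpace Ω] [BorelSpace Ω]

lemma exists_bcf_DV_ac (P Q : Measure Ω) [IsProbabilityMeasure P] [IsProbabilityMeasure Q]
    (hac : P ≪ Q) (L : ℝ) (hL : ENNReal.ofReal L < relEntE P Q) :
    ∃ g : Ω →ᵇ ℝ, L ≤ ∫ x, g x ∂P - Real.log (∫ x, Real.exp (g x) ∂Q) := by
  set ρ : Ω → ℝ := fun x => (P.rnDeriv Q x).toReal with hρ
  have hρm : Measurable ρ := (Measure.measurable_rnDeriv P Q).ennreal_toReal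
  have hρnn : ∀ x, 0 ≤ ρ x := fun x => ENNReal.toReal_nonneg
  have hllrm : Measurable (llr P Q) := measurable_llr P Q
  have hρpos : ∀ᵐ x ∂P, 0 < ρ x := by
    filter_upwards [Measure.rnDeriv_pos hac, hac.ae_le (Measure.rnDeriv_lt_top P Q)] with x h1 h2
    exact ENNReal.toReal_pos h1.ne' h2.ne
  -- the truncations
  set F : ℕ → Ω → ℝ := fun k x =>
    if ρ x = 0 then -(k:ℝ) else max (-(k:ℝ)) (min (k:ℝ) (llr P Q x)) with hF
  have hFm : ∀ k, Measurable (F k) := fun k =>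
    Measurable.ite (hρm (measurableSet_singleton 0)) measurable_const
      (measurable_const.max (measurable_const.min hllrm))
  have hFbd : ∀ k, ∀ x, |F k x| ≤ (k:ℝ) := by
    intro k x
    rw [hF]
    dsimp only
    split_ifs with h
    · rw [abs_neg, Nat.abs_cast]
    · exact clamp_abs_le (Nat.cast_nonneg k)
  have hFae : ∀ k, ∀ᵐ x ∂P, F k x = max (-(k:ℝ)) (min (k:ℝ) (llr P Q x)) := by
    intro k
    filter_upwards [hρpos] with x hx
    rw [hF]
    dsimp only
    rw [if_neg hx.ne']
  -- integrability of exp (F k) and the key upper bound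
  have hρint : Integrable ρ Q := Measure.integrable_toReal_rnDeriv
  have hρle : ∫ x, ρ x ∂Q ≤ 1 := by
    rw [hρ]
    rw [Measure.integral_toReal_rnDeriv hac]
    simp
  have heFint : ∀ k, Integrable (fun x => Real.exp (F k x)) Q := fun k =>
    (integrable_const (Real.exp (k:ℝ))).mono'
      (Real.continuous_exp.measurable.comp (hFm k)).aestronglyMeasurable
      (ae_of_all _ fun x => by
        rw [Real.norm_eq_abs, abs_of_pos (Real.exp_pos _)]
        exact Real.exp_le_exp.2 (le_trans (le_abs_self _) (hFbd k x)))
  have heFle : ∀ k, ∫ x, Real.exp (F k x) ∂Q ≤ 1 + Real.exp (-(k:ℝ)) := by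
    intro k
    have hpt : ∀ x, Real.exp (F k x) ≤ ρ x + Real.exp (-(k:ℝ)) := by
      intro x
      rw [hF]
      dsimp only
      split_ifs with h
      · linarith [hρnn x]
      · have h1 : max (-(k:ℝ)) (min (k:ℝ) (llr P Q x)) ≤ max (-(k:ℝ)) (llr P Q x) :=
          max_le_max le_rfl (min_le_right _ _)
        have h2 : Real.exp (max (-(k:ℝ)) (llr P Q x)) ≤ Real.exp (-(k:ℝ)) + Real.exp (llr P Q x) := by
          rcases max_cases (-(k:ℝ)) (llr P Q x) with ⟨hm, _⟩ | ⟨hm, _⟩ <;> rw [hm] <;>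
            linarith [Real.exp_pos (llr P Q x), Real.exp_pos (-(k:ℝ))]
        have h3 : Real.exp (llr P Q x) = ρ x := by
          rw [llr]
          exact Real.exp_log (lt_of_le_of_ne (hρnn x) (Ne.symm h))
        calc Real.exp (max (-(k:ℝ)) (min (k:ℝ) (llr P Q x)))
              ≤ Real.exp (max (-(k:ℝ)) (llr P Q x)) := Real.exp_le_exp.2 h1
          _ ≤ Real.exp (-(k:ℝ)) + Real.exp (llr P Q x) := h2
          _ = ρ x + Real.exp (-(k:ℝ)) := by rw [h3]; ring
    calc ∫ x, Real.exp (F k x) ∂Q ≤ ∫ x, (ρ x + Real.exp (-(k:ℝ))) ∂Q :=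
          integral_mono (heFint k) (hρint.add (integrable_const _)) hpt
      _ = ∫ x, ρ x ∂Q + Real.exp (-(k:ℝ)) := by
          rw [integral_add hρint (integrable_const _), integral_const]
          simp
      _ ≤ 1 + Real.exp (-(k:ℝ)) := by linarith
  -- integrability of exp(g) for any bounded g will be needed for positivity of its integral
  have hexpint : ∀ (g : Ω →ᵇ ℝ), Integrable (fun x => Real.exp (g x)) Q := fun g =>
    (integrable_const (Real.exp ‖g‖)).mono'
      (Real.continuous_exp.comp g.continuous).aestronglyMeasurable
      (ae_of_all _ fun x => by
        rw [Real.norm_eq_abs, abs_of_pos (Real.exp_pos _)]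
        exact Real.exp_le_exp.2 (le_trans (le_abs_self _) (g.norm_coe_le_norm x)))
  by_cases hint : Integrable (llr P Q) P
  · -- Case C : the relative entropy is finite
    rw [relEntE_eq, if_pos ⟨hac, hint⟩] at hL
    set I := ∫ x, llr P Q x ∂P with hI
    by_cases hL0 : L < 0
    · refine ⟨0, ?_⟩
      simp only [BoundedContinuousFunction.coe_zero, Pi.zero_apply, integral_zero, Real.exp_zero]
      rw [integral_const]
      simp only [measure_univ, probReal_univ, ENNReal.toReal_one, smul_eq_mul, mul_one, Real.log_one]
      linarith
    push_neg at hL0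
    have hLI : L < I := by
      by_contra hge
      push_neg at hge
      exact absurd hL (not_lt.2 (ENNReal.ofReal_le_ofReal hge))
    set δ := I - L with hδdef
    have hδ0 : 0 < δ := by linarith
    have htendF : Tendsto (fun k : ℕ => ∫ x, F k x ∂P) atTop (nhds I) := by
      refine tendsto_integral_of_dominated_convergence (fun x => |llr P Q x|)
        (fun k => (hFm k).aestronglyMeasurable) hint.abs ?_ ?_
      · intro k
        filter_upwards [hFae k] with x hx
        rw [Real.norm_eq_abs, hx]
        exact clamp_abs_le' (Nat.cast_nonneg k)
      · have hall : ∀ᵐ x ∂P, ∀ k, F k x = max (-(k:ℝ)) (min (k:ℝ) (llr P Q x)) :=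
          ae_all_iff.2 hFae
        filter_upwards [hall] with x hx
        refine tendsto_atTop_of_eventually_const (i₀ := ⌈|llr P Q x|⌉₊) fun k hk => ?_
        rw [hx k]
        have h1 : |llr P Q x| ≤ (k:ℝ) := le_trans (Nat.le_ceil _) (Nat.cast_le.2 hk)
        rw [abs_le] at h1
        rw [min_eq_right h1.2, max_eq_right h1.1]
    have hev1 : ∀ᶠ k : ℕ in atTop, I - δ/4 ≤ ∫ x, F k x ∂P :=
      htendF.eventually (eventually_ge_nhds (by linarith))
    have hev2 : ∀ᶠ k : ℕ in atTop, Real.exp (-(k:ℝ)) ≤ δ/8 := by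
      have hte : Tendsto (fun k : ℕ => Real.exp (-(k:ℝ))) atTop (nhds 0) :=
        Real.tendsto_exp_atBot.comp
          (tendsto_neg_atBot_iff.2 (tendsto_natCast_atTop_atTop))
      exact hte.eventually (eventually_le_nhds (by linarith))
    obtain ⟨k, hk1, hk2⟩ := (hev1.and hev2).exists
    have hek1 : Real.exp (-(k:ℝ)) ≤ 1 := by
      rw [← Real.exp_zero]
      exact Real.exp_le_exp.2 (neg_nonpos.2 (Nat.cast_nonneg k))
    set ε := Real.exp (-(k:ℝ)) * (δ/8) with hεdef
    have hε0 : 0 < ε := by positivity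
    have hεle : ε ≤ δ/8 := by nlinarith [Real.exp_pos (-(k:ℝ))]
    obtain ⟨g, hgabs, hgP, hgQ⟩ := DV_of_bounded P Q (hFm k) (Nat.cast_nonneg k) (hFbd k) hε0
    have hekε : Real.exp (k:ℝ) * ε = δ/8 := by
      rw [hεdef, ← mul_assoc, ← Real.exp_add]
      simp
    have hQ2 : ∫ x, Real.exp (g x) ∂Q ≤ 1 + (Real.exp (-(k:ℝ)) + δ/8) := by
      have := heFle k
      rw [hekε] at hgQ
      linarith
    have hlog : Real.log (∫ x, Real.exp (g x) ∂Q) ≤ Real.exp (-(k:ℝ)) + δ/8 := by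
      calc Real.log (∫ x, Real.exp (g x) ∂Q)
          ≤ Real.log (1 + (Real.exp (-(k:ℝ)) + δ/8)) :=
            Real.log_le_log (integral_exp_pos (hexpint g)) hQ2
        _ ≤ (1 + (Real.exp (-(k:ℝ)) + δ/8)) - 1 :=
            Real.log_le_sub_one_of_pos (by positivity)
        _ = Real.exp (-(k:ℝ)) + δ/8 := by ring
    refine ⟨g, ?_⟩
    have h5 : I - δ/4 - ε ≤ ∫ x, g x ∂P := by linarith
    have : L = I - δ := by rw [hδdef]; ring
    linarith
  · -- Case B : llr is not integrable
    obtain ⟨hinvInt, -⟩ := aux_inv_rnDeriv P Q hac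
    set N : Ω → ℝ := fun x => min (llr P Q x) 0 with hNdef
    have hNm : Measurable N := hllrm.min measurable_const
    have hNint : Integrable N P := by
      refine hinvInt.mono hNm.aestronglyMeasurable ?_
      filter_upwards [hρpos] with x hx
      rw [Real.norm_eq_abs, Real.norm_eq_abs, abs_of_nonneg (inv_nonneg.2 (hρnn x))]
      rcases le_total (llr P Q x) 0 with h | h
      · rw [hNdef]
        dsimp only
        rw [min_eq_left h, abs_of_nonpos h]
        have h2 : -llr P Q x = Real.log ((ρ x)⁻¹) := by
          rw [Real.log_inv]
          rfl
        rw [h2]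
        have h3 := Real.log_le_sub_one_of_pos (x := (ρ x)⁻¹) (by positivity)
        linarith
      · rw [hNdef]
        dsimp only
        rw [min_eq_right h]
        simp [inv_nonneg.2 (hρnn x)]
    set G : Ω → ℝ := fun x => max (llr P Q x) 0 with hGdef
    have hGm : Measurable G := hllrm.max measurable_const
    have hGnn : ∀ x, 0 ≤ G x := fun x => le_max_right _ _
    have hGni : ¬ Integrable G P := by
      intro h
      apply hint
      have heq : llr P Q = fun x => G x + N x := by
        funext x
        rw [hGdef, hNdef]
        dsimp only
        rw [max_add_min, add_zero]
      rw [heq]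
      exact h.add hNint
    have hGlin : ∫⁻ x, ENNReal.ofReal (G x) ∂P = ⊤ := by
      by_contra hne
      apply hGni
      refine ⟨hGm.aestronglyMeasurable, ?_⟩
      rw [hasFiniteIntegral_iff_ofReal (ae_of_all _ hGnn)]
      exact lt_top_iff_ne_top.2 hne
    have hkey : ∀ C : ℝ, ∃ k₀ : ℕ, ∀ k : ℕ, k₀ ≤ k → C ≤ ∫ x, min (G x) (k:ℝ) ∂P := by
      intro C
      have hmono : Monotone (fun (k : ℕ) (x : Ω) => ENNReal.ofReal (min (G x) (k:ℝ))) :=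
        fun i j hij x => ENNReal.ofReal_le_ofReal
          (le_min (min_le_left _ _) ((min_le_right _ _).trans (Nat.cast_le.2 hij)))
      have hptsup : ∀ x, ⨆ k : ℕ, ENNReal.ofReal (min (G x) (k:ℝ)) = ENNReal.ofReal (G x) := by
        intro x
        apply le_antisymm
        · exact iSup_le fun k => ENNReal.ofReal_le_ofReal (min_le_left _ _)
        · refine le_trans ?_ (le_iSup _ ⌈G x⌉₊)
          rw [min_eq_left (Nat.le_ceil _)]
      have hsup : ⨆ k : ℕ, ∫⁻ x, ENNReal.ofReal (min (G x) (k:ℝ)) ∂P = ⊤ := by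
        rw [← lintegral_iSup (fun k => (hGm.min measurable_const).ennreal_ofReal) hmono]
        rw [lintegral_congr hptsup, hGlin]
      have hfin : ∀ k : ℕ, ∫⁻ x, ENNReal.ofReal (min (G x) (k:ℝ)) ∂P ≤ ENNReal.ofReal (k:ℝ) := by
        intro k
        calc ∫⁻ x, ENNReal.ofReal (min (G x) (k:ℝ)) ∂P
            ≤ ∫⁻ _, ENNReal.ofReal (k:ℝ) ∂P :=
              lintegral_mono fun x => ENNReal.ofReal_le_ofReal (min_le_right _ _)
          _ = ENNReal.ofReal (k:ℝ) := by rw [lintegral_const, measure_univ, mul_one]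
      obtain ⟨k₀, hk₀⟩ : ∃ k₀ : ℕ, ENNReal.ofReal C < ∫⁻ x, ENNReal.ofReal (min (G x) (k₀:ℝ)) ∂P := by
        rw [← lt_iSup_iff, hsup]
        exact ENNReal.ofReal_lt_top
      refine ⟨k₀, fun k hk => ?_⟩
      have hlt : ENNReal.ofReal C < ∫⁻ x, ENNReal.ofReal (min (G x) (k:ℝ)) ∂P :=
        lt_of_lt_of_le hk₀ (lintegral_mono fun x => hmono hk x)
      have hnn : ∀ x, 0 ≤ min (G x) (k:ℝ) := fun x => le_min (hGnn x) (Nat.cast_nonneg k)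
      rw [integral_eq_lintegral_of_nonneg_ae (ae_of_all _ hnn)
        (hGm.min measurable_const).aestronglyMeasurable]
      rcases le_or_gt C 0 with hC | hC
      · exact le_trans hC ENNReal.toReal_nonneg
      · calc C = (ENNReal.ofReal C).toReal := by rw [ENNReal.toReal_ofReal hC.le]
          _ ≤ (∫⁻ x, ENNReal.ofReal (min (G x) (k:ℝ)) ∂P).toReal :=
              ENNReal.toReal_mono (lt_of_le_of_lt (hfin k) ENNReal.ofReal_lt_top).ne hlt.le
    -- pointwise comparison with F k
    have hFlow : ∀ k : ℕ, ∀ᵐ x ∂P, min (G x) (k:ℝ) + N x ≤ F k x := by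
      intro k
      filter_upwards [hFae k] with x hx
      rw [hx, hGdef, hNdef]
      dsimp only
      rcases le_total (llr P Q x) 0 with h | h
      · rw [max_eq_right h, min_eq_left h, min_eq_left (Nat.cast_nonneg k), zero_add,
          min_eq_right (h.trans (Nat.cast_nonneg k))]
        exact le_max_right _ _
      · rw [max_eq_left h, min_eq_right h, add_zero, min_comm]
        exact le_max_right _ _
    have hminint : ∀ k : ℕ, Integrable (fun x => min (G x) (k:ℝ)) P := fun k =>
      (integrable_const (k:ℝ)).mono' (hGm.min measurable_const).aestronglyMeasurable
        (ae_of_all _ fun x => by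
          rw [Real.norm_eq_abs, abs_of_nonneg (le_min (hGnn x) (Nat.cast_nonneg k))]
          exact min_le_right _ _)
    have hFint : ∀ k : ℕ, Integrable (F k) P := fun k =>
      (integrable_const (k:ℝ)).mono' (hFm k).aestronglyMeasurable
        (ae_of_all _ fun x => by rw [Real.norm_eq_abs]; exact hFbd k x)
    have hFge : ∀ k : ℕ, ∫ x, min (G x) (k:ℝ) ∂P + ∫ x, N x ∂P ≤ ∫ x, F k x ∂P := by
      intro k
      rw [← integral_add (hminint k) hNint]
      exact integral_mono_ae ((hminint k).add hNint) (hFint k) (hFlow k)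
    -- conclusion
    set C := L + 1 + Real.log 3 - ∫ x, N x ∂P with hCdef
    obtain ⟨k₀, hk₀⟩ := hkey C
    set k := k₀ with hkdef
    set ε := Real.exp (-(k:ℝ)) with hεdef
    have hε0 : 0 < ε := Real.exp_pos _
    have hek1 : Real.exp (-(k:ℝ)) ≤ 1 := by
      rw [← Real.exp_zero]
      exact Real.exp_le_exp.2 (neg_nonpos.2 (Nat.cast_nonneg k))
    obtain ⟨g, hgabs, hgP, hgQ⟩ := DV_of_bounded P Q (hFm k) (Nat.cast_nonneg k) (hFbd k) hε0
    have hekε : Real.exp (k:ℝ) * ε = 1 := by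
      rw [hεdef, ← Real.exp_add]
      simp
    have hQ3 : ∫ x, Real.exp (g x) ∂Q ≤ 3 := by
      have h1 := heFle k
      rw [hekε] at hgQ
      linarith
    have hlog : Real.log (∫ x, Real.exp (g x) ∂Q) ≤ Real.log 3 :=
      Real.log_le_log (integral_exp_pos (hexpint g)) hQ3
    refine ⟨g, ?_⟩
    have h6 := hFge k
    have h7 := hk₀ k le_rfl
    have h8 : ε ≤ 1 := hek1
    linarith

end CaseBC

section Sup
variable {Ω : Type*} [MeasurableSpace Ω] [MetricSpace Ω] [BorelSpace Ω]

lemma relEntE_le_iSup (P Q : Measure Ω) [IsProbabilityMeasure P] [IsProbabilityMeasure Q] :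
    relEntE P Q ≤ ⨆ g : Ω →ᵇ ℝ,
      ENNReal.ofReal (∫ x, g x ∂P - Real.log (∫ x, Real.exp (g x) ∂Q)) := by
  by_contra hlt
  push_neg at hlt
  obtain ⟨c, hc1, hc2⟩ := exists_between hlt
  have hc_ne : c ≠ ⊤ := hc2.ne_top
  have hDV : ∃ g : Ω →ᵇ ℝ, c.toReal ≤ ∫ x, g x ∂P - Real.log (∫ x, Real.exp (g x) ∂Q) := by
    by_cases hac : P ≪ Q
    · exact exists_bcf_DV_ac P Q hac c.toReal (by rwa [ENNReal.ofReal_toReal hc_ne])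
    · exact exists_bcf_DV_not_ac P Q hac c.toReal
  obtain ⟨g, hg⟩ := hDV
  have hle : c ≤ ⨆ g : Ω →ᵇ ℝ,
      ENNReal.ofReal (∫ x, g x ∂P - Real.log (∫ x, Real.exp (g x) ∂Q)) := by
    refine le_trans ?_ (le_iSup _ g)
    rw [← ENNReal.ofReal_toReal hc_ne]
    exact ENNReal.ofReal_le_ofReal hg
  exact absurd (lt_of_le_of_lt hle hc1) (lt_irrefl c)

end Sup

/-- Γ-liminf part of Lemma 3.1: if `R n = p_n·(m⊗m)` with `−log p_n ≥ −c_n` on every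
compact set and `c_n → 0` (so `R n ⇀ m ⊗ m`), then for any weakly convergent sequence of
couplings `π_n ⇀ π` one has `liminf_n H(π_n | R_n) ≥ H(π | m⊗m)`. -/
theorem gamma_liminf_relEnt {M : Type*} [MetricSpace M] [PolishSpace M]
    [MeasurableSpace M] [BorelSpace M]
    (m : Measure M) [IsProbabilityMeasure m]
    (p : ℕ → M × M → ℝ) (hpmeas : ∀ n, Measurable (p n)) (hppos : ∀ n z, 0 < p n z)
    (R : ℕ → Measure (M × M))
    (hR : ∀ n, R n = (m.prod m).withDensity fun z => ENNReal.ofReal (p n z))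
    (hRprob : ∀ n, IsProbabilityMeasure (R n))
    (c : ℕ → ℝ) (hc : Tendsto c atTop (nhds 0))
    (hlb : ∀ K : Set (M × M), IsCompact K → ∀ n, ∀ z ∈ K, -(c n) ≤ -Real.log (p n z))
    (πseq : ℕ → Measure (M × M)) (πlim : Measure (M × M))
    (hπprob : ∀ n, IsProbabilityMeasure (πseq n)) (hπlim : IsProbabilityMeasure πlim)
    (μ ν : Measure M)
    (hcoupl : ∀ n, (πseq n).fst = μ ∧ (πseq n).snd = ν)
    (hcoupl' : πlim.fst = μ ∧ πlim.snd = ν)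
    (hweak : ∀ f : BoundedContinuousFunction (M × M) ℝ,
      Tendsto (fun n => ∫ z, f z ∂(πseq n)) atTop (nhds (∫ z, f z ∂πlim))) :
    relEntE πlim (m.prod m) ≤ atTop.liminf fun n => relEntE (πseq n) (R n) := by

  set Q : Measure (M × M) := m.prod m with hQdef
  refine le_trans (relEntE_le_iSup πlim Q) (iSup_le fun g => ?_)
  -- density bound from the compact-set hypothesis applied to singletons
  have hpn : ∀ n z, p n z ≤ Real.exp (c n) := by
    intro n z
    have h := hlb {z} isCompact_singleton n z rfl
    have hlog : Real.log (p n z) ≤ c n := by linarith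
    exact (Real.log_le_iff_le_exp (hppos n z)).1 hlog
  set Eg : ℝ := ∫ z, Real.exp (g z) ∂Q with hEg
  have hgm : Measurable (g : M × M → ℝ) := g.continuous.measurable
  have hegm : Measurable fun z => Real.exp (g z) := Real.continuous_exp.measurable.comp hgm
  have hexpint : ∀ (P : Measure (M × M)) [IsProbabilityMeasure P],
      Integrable (fun z => Real.exp (g z)) P := by
    intro P hP
    exact (integrable_const (Real.exp ‖g‖)).mono'
      (Real.continuous_exp.comp g.continuous).aestronglyMeasurable
      (ae_of_all _ fun x => by
        rw [Real.norm_eq_abs, abs_of_pos (Real.exp_pos _)]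
        exact Real.exp_le_exp.2 (le_trans (le_abs_self _) (g.norm_coe_le_norm x)))
  have hEgpos : 0 < Eg := integral_exp_pos (hexpint Q)
  -- bound ∫ exp g dR n ≤ exp (c n) * Eg
  have hRlin : ∀ n, ∫ z, Real.exp (g z) ∂(R n) ≤ Real.exp (c n) * Eg := by
    intro n
    have hQlint : ∫⁻ z, ENNReal.ofReal (Real.exp (g z)) ∂Q ≠ ⊤ := by
      refine ne_top_of_le_ne_top (b := ENNReal.ofReal (Real.exp ‖g‖)) ENNReal.ofReal_ne_top ?_
      calc ∫⁻ z, ENNReal.ofReal (Real.exp (g z)) ∂Q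
          ≤ ∫⁻ _, ENNReal.ofReal (Real.exp ‖g‖) ∂Q := lintegral_mono fun z =>
            ENNReal.ofReal_le_ofReal (Real.exp_le_exp.2
              (le_trans (le_abs_self _) (g.norm_coe_le_norm z)))
        _ = ENNReal.ofReal (Real.exp ‖g‖) := by rw [lintegral_const, measure_univ, mul_one]
    have hEg' : Eg = (∫⁻ z, ENNReal.ofReal (Real.exp (g z)) ∂Q).toReal := by
      rw [hEg, integral_eq_lintegral_of_nonneg_ae (ae_of_all _ fun z => (Real.exp_pos _).le)
        hegm.aestronglyMeasurable]
    have hRn : ∫⁻ z, ENNReal.ofReal (Real.exp (g z)) ∂(R n)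
        ≤ ENNReal.ofReal (Real.exp (c n)) * ∫⁻ z, ENNReal.ofReal (Real.exp (g z)) ∂Q := by
      rw [hR n]
      rw [lintegral_withDensity_eq_lintegral_mul _ (hpmeas n).ennreal_ofReal
        hegm.ennreal_ofReal]
      rw [← lintegral_const_mul _ hegm.ennreal_ofReal]
      refine lintegral_mono fun z => ?_
      exact mul_le_mul_left (ENNReal.ofReal_le_ofReal (hpn n z)) _
    haveI := hRprob n
    rw [integral_eq_lintegral_of_nonneg_ae (ae_of_all _ fun z => (Real.exp_pos _).le)
      hegm.aestronglyMeasurable]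
    calc (∫⁻ z, ENNReal.ofReal (Real.exp (g z)) ∂(R n)).toReal
        ≤ (ENNReal.ofReal (Real.exp (c n)) * ∫⁻ z, ENNReal.ofReal (Real.exp (g z)) ∂Q).toReal := by
          refine ENNReal.toReal_mono ?_ hRn
          exact ENNReal.mul_ne_top ENNReal.ofReal_ne_top hQlint
      _ = Real.exp (c n) * Eg := by
          rw [ENNReal.toReal_mul, ENNReal.toReal_ofReal (Real.exp_pos _).le, hEg']
  -- Gibbs inequality for each n
  have hkey : ∀ n, ENNReal.ofReal (∫ z, g z ∂(πseq n) - c n - Real.log Eg)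
      ≤ relEntE (πseq n) (R n) := by
    intro n
    haveI := hπprob n
    haveI := hRprob n
    refine le_trans (ENNReal.ofReal_le_ofReal ?_)
      (ofReal_DV_le_relEntE (πseq n) (R n) hgm (fun x => abs_le.2
        ⟨neg_le_of_abs_le (g.norm_coe_le_norm x), le_trans (le_abs_self _)
          (g.norm_coe_le_norm x)⟩) (B := ‖g‖))
    have hlog : Real.log (∫ z, Real.exp (g z) ∂(R n)) ≤ c n + Real.log Eg := by
      calc Real.log (∫ z, Real.exp (g z) ∂(R n))
          ≤ Real.log (Real.exp (c n) * Eg) :=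
            Real.log_le_log (integral_exp_pos (hexpint (R n))) (hRlin n)
        _ = c n + Real.log Eg := by
            rw [Real.log_mul (Real.exp_ne_zero _) hEgpos.ne', Real.log_exp]
    linarith
  -- pass to the liminf
  have htendsto : Tendsto (fun n => ∫ z, g z ∂(πseq n) - c n - Real.log Eg) atTop
      (nhds (∫ z, g z ∂πlim - Real.log Eg)) := by
    have h1 := (hweak g).sub hc
    have h2 := h1.sub (tendsto_const_nhds (x := Real.log Eg))
    simpa using h2
  have hofReal : Tendsto (fun n => ENNReal.ofReal (∫ z, g z ∂(πseq n) - c n - Real.log Eg))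
      atTop (nhds (ENNReal.ofReal (∫ z, g z ∂πlim - Real.log Eg))) :=
    (ENNReal.continuous_ofReal.tendsto _).comp htendsto
  calc ENNReal.ofReal (∫ z, g z ∂πlim - Real.log Eg)
      = atTop.liminf (fun n => ENNReal.ofReal (∫ z, g z ∂(πseq n) - c n - Real.log Eg)) :=
        (hofReal.liminf_eq).symm
    _ ≤ atTop.liminf fun n => relEntE (πseq n) (R n) :=
        liminf_le_liminf (Eventually.of_forall hkey)
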